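/- Let γ₀ > 0 and f, g as in the normal form system f' = 2γ₀g²f, g' = -2γ₀fg² with f(0), g(0) > 0. Then f is strictly increasing, g is strictly decreasing, f(t) → f(0) + g(0) and g(t) → 0 as t → ∞. -/

import Mathlib

open Set Filter

/-- Backward uniqueness for linear ODE x' = c t * x: if x T = 0 then x 0 = 0. -/
lemma linODE_zero (c x : ℝ → ℝ) (T : ℝ) (hT : 0 ≤ T)
    (hc : ContinuousOn c (Icc 0 T))
    (hx : ∀ t ∈ Icc (0:ℝ) T, HasDerivAt x (c t * x t) t)
    (hxT : x T = 0) : x 0 = 0 := by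
  obtain ⟨K, hK⟩ := (isCompact_Icc.exists_bound_of_continuousOn hc)
  set y : ℝ → ℝ := fun s => x (T - s) with hy
  have hyd : ∀ s ∈ Icc (0:ℝ) T, HasDerivAt y (-(c (T - s) * y s)) s := by
    intro s hs
    have hmem : T - s ∈ Icc (0:ℝ) T := ⟨by linarith [hs.2], by linarith [hs.1]⟩
    have h1 : HasDerivAt (fun s : ℝ => T - s) (-1) s := by
      simpa using (hasDerivAt_id s).const_sub T
    have := (hx _ hmem).comp s h1
    simpa [hy, mul_comm, Function.comp_def] using this
  have hycont : ContinuousOn y (Icc 0 T) :=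
    fun s hs => ((hyd s hs).continuousAt).continuousWithinAt
  have key : ∀ s ∈ Icc (0:ℝ) T, ‖y s‖ ≤ gronwallBound 0 K 0 (s - 0) := by
    apply norm_le_gronwallBound_of_norm_deriv_right_le hycont
      (fun s hs => ((hyd s (Ico_subset_Icc_self hs)).hasDerivWithinAt))
    · simp [hy, hxT]
    · intro s hs
      have hmem : T - s ∈ Icc (0:ℝ) T := ⟨by linarith [hs.2], by linarith [hs.1]⟩
      have := hK _ hmem
      calc ‖-(c (T - s) * y s)‖ = ‖c (T - s)‖ * ‖y s‖ := by
            rw [norm_neg, norm_mul]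
        _ ≤ K * ‖y s‖ + 0 := by
            have : (0:ℝ) ≤ ‖y s‖ := norm_nonneg _
            nlinarith
  have := key T ⟨hT, le_refl T⟩
  rw [gronwallBound_ε0] at this
  simp only [zero_mul] at this
  have : ‖y T‖ ≤ 0 := this
  have : y T = 0 := by simpa [norm_eq_zero] using le_antisymm this (norm_nonneg _)
  simpa [hy] using this

theorem stmt13 (γ₀ : ℝ) (hγ : 0 < γ₀) (f g : ℝ → ℝ)
    (hf0 : 0 < f 0) (hg0 : 0 < g 0)
    (hf : ∀ t ≥ (0:ℝ), HasDerivAt f (2 * γ₀ * (g t)^2 * f t) t)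
    (hg : ∀ t ≥ (0:ℝ), HasDerivAt g (-(2 * γ₀) * f t * (g t)^2) t) :
    StrictMonoOn f (Set.Ici (0:ℝ)) ∧ StrictAntiOn g (Set.Ici (0:ℝ))
    ∧ Filter.Tendsto f Filter.atTop (nhds (f 0 + g 0))
    ∧ Filter.Tendsto g Filter.atTop (nhds 0) := by
  have hfc : ContinuousOn f (Ici (0:ℝ)) :=
    fun t ht => ((hf t ht).continuousAt).continuousWithinAt
  have hgc : ContinuousOn g (Ici (0:ℝ)) :=
    fun t ht => ((hg t ht).continuousAt).continuousWithinAt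
  -- positivity of f
  have hfpos : ∀ t ≥ (0:ℝ), 0 < f t := by
    intro t ht
    by_contra h
    push_neg at h
    obtain ⟨T, hTmem, hT0⟩ : ∃ T ∈ Icc (0:ℝ) t, f T = 0 := by
      have := intermediate_value_Icc' ht (hfc.mono (Icc_subset_Ici_self))
      have h0 : (0:ℝ) ∈ Icc (f t) (f 0) := ⟨h, le_of_lt hf0⟩
      obtain ⟨T, hT, hTe⟩ := this h0
      exact ⟨T, hT, hTe⟩
    have := linODE_zero (fun s => 2 * γ₀ * (g s)^2) f T hTmem.1
      (by
        apply ContinuousOn.mul continuousOn_const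
        exact (hgc.mono Icc_subset_Ici_self).pow 2)
      (fun s hs => hf s hs.1) hT0
    linarith
  -- positivity of g
  have hgpos : ∀ t ≥ (0:ℝ), 0 < g t := by
    intro t ht
    by_contra h
    push_neg at h
    obtain ⟨T, hTmem, hT0⟩ : ∃ T ∈ Icc (0:ℝ) t, g T = 0 := by
      have := intermediate_value_Icc' ht (hgc.mono (Icc_subset_Ici_self))
      have h0 : (0:ℝ) ∈ Icc (g t) (g 0) := ⟨h, le_of_lt hg0⟩
      obtain ⟨T, hT, hTe⟩ := this h0
      exact ⟨T, hT, hTe⟩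
    have := linODE_zero (fun s => -(2 * γ₀) * f s * g s) g T hTmem.1
      (by
        apply ContinuousOn.mul
        · exact continuousOn_const.mul (hfc.mono Icc_subset_Ici_self)
        · exact hgc.mono Icc_subset_Ici_self)
      (fun s hs => by
        have := hg s hs.1
        convert this using 1
        ring) hT0
    linarith
  -- conservation
  have hsum : ∀ t ≥ (0:ℝ), f t + g t = f 0 + g 0 := by
    intro t ht
    have key := constant_of_has_deriv_right_zero
      (f := fun s => f s + g s) (a := 0) (b := t)
      (((hfc.mono Icc_subset_Ici_self)).add (hgc.mono Icc_subset_Ici_self))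
      (fun s hs => by
        have : HasDerivAt (fun s => f s + g s) 0 s := by
          have := (hf s hs.1).add (hg s hs.1)
          have e : 2 * γ₀ * (g s)^2 * f s + -(2 * γ₀) * f s * (g s)^2 = 0 := by ring
          rw [e] at this
          exact this
        exact this.hasDerivWithinAt)
    exact key t ⟨ht, le_refl t⟩
  -- strict monotonicity of f
  have hmono : StrictMonoOn f (Ici (0:ℝ)) := by
    apply strictMonoOn_of_deriv_pos (convex_Ici 0) hfc
    intro t ht
    rw [interior_Ici] at ht
    rw [(hf t (le_of_lt ht)).deriv]
    have h1 := hfpos t (le_of_lt ht)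
    have h2 := hgpos t (le_of_lt ht)
    positivity
  -- strict antitonicity of g
  have hanti : StrictAntiOn g (Ici (0:ℝ)) := by
    apply strictAntiOn_of_deriv_neg (convex_Ici 0) hgc
    intro t ht
    rw [interior_Ici] at ht
    rw [(hg t (le_of_lt ht)).deriv]
    have h1 := hfpos t (le_of_lt ht)
    have h2 := hgpos t (le_of_lt ht)
    have := mul_pos (mul_pos (by linarith : (0:ℝ) < 2 * γ₀) h1) (pow_pos h2 2)
    nlinarith
  refine ⟨hmono, hanti, ?_⟩
  -- limit of g
  set F : ℝ → ℝ := fun t => g (max t 0) with hF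
  have hFanti : Antitone F := by
    intro a b hab
    rcases le_or_gt (max a 0) (max b 0) with h | h
    · exact (hanti.antitoneOn) (le_max_right a 0) (le_max_right b 0) h
    · exact absurd (max_le_max hab (le_refl 0)) (not_le.mpr h)
  have hFbdd : BddBelow (range F) := ⟨0, by
    rintro _ ⟨t, rfl⟩
    exact le_of_lt (hgpos _ (le_max_right t 0))⟩
  have hFt := tendsto_atTop_ciInf hFanti hFbdd
  set m := ⨅ t, F t with hm
  have hmle : ∀ t, m ≤ F t := fun t => ciInf_le hFbdd t
  have hm0 : 0 ≤ m := le_ciInf (fun t => le_of_lt (hgpos _ (le_max_right t 0)))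
  have hmzero : m = 0 := by
    by_contra hne
    have hmpos : 0 < m := lt_of_le_of_ne hm0 (Ne.symm hne)
    set c := 2 * γ₀ * f 0 * m^2 with hc
    have hcpos : 0 < c := by positivity
    -- h t := g t + c t is antitone on Ici 0
    have hdaux : ∀ t > (0:ℝ), HasDerivAt (fun t => g t + c * t) (-(2 * γ₀) * f t * (g t)^2 + c) t := by
      intro t ht
      have h2 : HasDerivAt (fun t : ℝ => c * t) c t := by
        simpa using (hasDerivAt_id t).const_mul c
      exact (hg t (le_of_lt ht)).add h2
    have haux : AntitoneOn (fun t => g t + c * t) (Ici (0:ℝ)) := by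
      apply antitoneOn_of_deriv_nonpos (convex_Ici 0)
      · exact (hgc.add (continuousOn_const.mul continuousOn_id))
      · intro t ht
        rw [interior_Ici] at ht
        exact (hdaux t ht).differentiableAt.differentiableWithinAt
      · intro t ht
        rw [interior_Ici] at ht
        rw [(hdaux t ht).deriv]
        have h1 : f 0 ≤ f t := le_of_lt (hmono (mem_Ici.mpr (le_refl 0)) (mem_Ici.mpr (le_of_lt ht)) ht)
        have h2 : m ≤ g t := by
          have h' : F t = g t := by
            simp only [hF]
            exact congrArg g (sup_eq_left.mpr (le_of_lt ht))
          exact h' ▸ hmle t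
        have h3 : 0 < f t := hfpos t (le_of_lt ht)
        have : m^2 ≤ (g t)^2 := by nlinarith
        rw [hc]
        nlinarith [mul_le_mul h1 this (sq_nonneg m) (le_of_lt h3), hγ]
    -- contradiction at large t
    set t₀ := (g 0 + 1) / c with ht₀
    have ht₀pos : 0 ≤ t₀ := by
      apply div_nonneg _ (le_of_lt hcpos)
      linarith
    have := haux (self_mem_Ici) (mem_Ici.mpr ht₀pos) ht₀pos
    simp only [mul_zero, add_zero] at this
    have hgt₀ : 0 < g t₀ := hgpos t₀ ht₀pos
    have : g t₀ + c * t₀ ≤ g 0 := by linarith [this]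
    rw [ht₀, mul_div_cancel₀ _ (ne_of_gt hcpos)] at this
    linarith
  rw [hmzero] at hFt
  have hgF : g =ᶠ[atTop] F := by
    filter_upwards [eventually_ge_atTop (0:ℝ)] with t ht
    rw [hF]
    simp [max_eq_left ht]
  have hgt : Tendsto g atTop (nhds 0) := hFt.congr' hgF.symm
  constructor
  · have : f =ᶠ[atTop] (fun t => (f 0 + g 0) - g t) := by
      filter_upwards [eventually_ge_atTop (0:ℝ)] with t ht
      have := hsum t ht
      linarith
    have hlim : Tendsto (fun t => (f 0 + g 0) - g t) atTop (nhds ((f 0 + g 0) - 0)) :=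
      tendsto_const_nhds.sub hgt
    rw [sub_zero] at hlim
    exact hlim.congr' this.symm
  · exact hgt
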